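/- Let S be a finite set of jobs and S' ⊆ S. Let π and π' be two permutations of S', and let σ be a permutation of S \ S'. Suppose each job i has a nondecreasing cost function f_i and define F(π) as the sum over all jobs i occurring in π of f_i(C_i(π)). If C_2(π) ≤ C_2(π'), C_3(π) ≤ C_3(π') and F(π) ≤ F(π'), then C_2(π ++ σ) ≤ C_2(π' ++ σ), C_3(π ++ σ) ≤ C_3(π' ++ σ) and F(π ++ σ) ≤ F(π' ++ σ). -/
import Mathlib


/-- Machine completion times `(C₁, C₂, C₃)` of a job sequence in a
three-machine flowshop with processing times `p i j`. -/
def flowComp (p : ℕ → Fin 3 → ℕ) (π : List ℕ) : ℕ × ℕ × ℕ :=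
  π.foldl (fun c i =>
    let c1 := c.1 + p i 0
    let c2 := max c.2.1 c1 + p i 1
    let c3 := max c.2.2 c2 + p i 2
    (c1, c2, c3)) (0, 0, 0)

/-- Completion time on machine 2. -/
def C2 (p : ℕ → Fin 3 → ℕ) (π : List ℕ) : ℕ := (flowComp p π).2.1

/-- Completion time on machine 3. -/
def C3 (p : ℕ → Fin 3 → ℕ) (π : List ℕ) : ℕ := (flowComp p π).2.2

/-- `π` is a permutation of the finite jobset `S`: it lists each element
of `S` exactly once. -/
def IsPermOf (π : List ℕ) (S : Finset ℕ) : Prop :=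
  π.Nodup ∧ ∀ x, x ∈ π ↔ x ∈ S

/-- Completion time of job `i` in the sequence `π`: `C₃` of the prefix of `π`
ending at (the first occurrence of) `i`. -/
def jobC (p : ℕ → Fin 3 → ℕ) (π : List ℕ) (i : ℕ) : ℕ :=
  C3 p (π.takeWhile (· != i) ++ [i])

/-- `F(π)`: the sum over jobs `i` occurring in `π` of `f i (C_i(π))`. -/
noncomputable def Fcost (p : ℕ → Fin 3 → ℕ) (f : ℕ → ℕ → ℝ) (π : List ℕ) : ℝ :=
  (π.map (fun i => f i (jobC p π i))).sum

namespace StmtAux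

def step (p : ℕ → Fin 3 → ℕ) (c : ℕ × ℕ × ℕ) (i : ℕ) : ℕ × ℕ × ℕ :=
  let c1 := c.1 + p i 0
  let c2 := max c.2.1 c1 + p i 1
  let c3 := max c.2.2 c2 + p i 2
  (c1, c2, c3)

lemma flowComp_eq (p : ℕ → Fin 3 → ℕ) (π : List ℕ) :
    flowComp p π = π.foldl (step p) (0, 0, 0) := rfl

lemma flowComp_append (p : ℕ → Fin 3 → ℕ) (π σ : List ℕ) :
    flowComp p (π ++ σ) = σ.foldl (step p) (flowComp p π) := by
  simp [flowComp_eq, List.foldl_append]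

def Rle (a b : ℕ × ℕ × ℕ) : Prop := a.1 = b.1 ∧ a.2.1 ≤ b.2.1 ∧ a.2.2 ≤ b.2.2

lemma step_mono (p : ℕ → Fin 3 → ℕ) {a b : ℕ × ℕ × ℕ} (h : Rle a b) (i : ℕ) :
    Rle (step p a i) (step p b i) := by
  obtain ⟨h1, h2, h3⟩ := h
  refine ⟨by simp [step, h1], ?_, ?_⟩ <;> simp only [step, h1] <;> omega

lemma foldl_mono (p : ℕ → Fin 3 → ℕ) {a b : ℕ × ℕ × ℕ} (h : Rle a b) (σ : List ℕ) :
    Rle (σ.foldl (step p) a) (σ.foldl (step p) b) := by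
  induction σ generalizing a b with
  | nil => exact h
  | cons x xs ih => exact ih (step_mono p h x)

lemma foldl_fst (p : ℕ → Fin 3 → ℕ) (σ : List ℕ) (a : ℕ × ℕ × ℕ) :
    (σ.foldl (step p) a).1 = a.1 + (σ.map fun i => p i 0).sum := by
  induction σ generalizing a with
  | nil => simp
  | cons x xs ih => simp [step, ih]; omega

lemma takeWhile_append_left {i : ℕ} {π : List ℕ} (σ : List ℕ) (h : i ∈ π) :
    (π ++ σ).takeWhile (· != i) = π.takeWhile (· != i) := by
  induction π with
  | nil => simp at h
  | cons x xs ih =>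
    by_cases hx : x = i
    · simp [List.takeWhile_cons, hx]
    · have hm : i ∈ xs := by
        rcases List.mem_cons.mp h with h' | h'
        · exact absurd h'.symm hx
        · exact h'
      simp [List.takeWhile_cons, hx, ih hm]

lemma takeWhile_append_right {i : ℕ} {π : List ℕ} (σ : List ℕ) (h : i ∉ π) :
    (π ++ σ).takeWhile (· != i) = π ++ σ.takeWhile (· != i) := by
  induction π with
  | nil => simp
  | cons x xs ih =>
    have hx : x ≠ i := fun hh => h (by simp [hh])
    have hm : i ∉ xs := fun hh => h (by simp [hh])
    simp [List.takeWhile_cons, hx, ih hm]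

end StmtAux

open StmtAux
theorem stmt_2 (p : ℕ → Fin 3 → ℕ) (f : ℕ → ℕ → ℝ)
    (hfmono : ∀ i, Monotone (f i)) (hfnn : ∀ i t, 0 ≤ f i t)
    (S S' : Finset ℕ) (hS' : S' ⊆ S)
    (π π' σ : List ℕ) (hπ : IsPermOf π S') (hπ' : IsPermOf π' S')
    (hσ : IsPermOf σ (S \ S'))
    (h2 : C2 p π ≤ C2 p π') (h3 : C3 p π ≤ C3 p π')
    (hf : Fcost p f π ≤ Fcost p f π') :
    C2 p (π ++ σ) ≤ C2 p (π' ++ σ) ∧ C3 p (π ++ σ) ≤ C3 p (π' ++ σ) ∧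
      Fcost p f (π ++ σ) ≤ Fcost p f (π' ++ σ) := by
  -- π and π' are permutations of each other
  have hperm : π.Perm π' :=
    (List.perm_ext_iff_of_nodup hπ.1 hπ'.1).mpr
      (fun x => by rw [hπ.2, hπ'.2])
  have hfst : (flowComp p π).1 = (flowComp p π').1 := by
    rw [flowComp_eq, flowComp_eq, foldl_fst, foldl_fst]
    exact congrArg _ ((hperm.map _).sum_eq)
  have hR : Rle (flowComp p π) (flowComp p π') := ⟨hfst, h2, h3⟩
  -- monotonicity of appended folds
  have key : ∀ τ : List ℕ, Rle (flowComp p (π ++ τ)) (flowComp p (π' ++ τ)) := by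
    intro τ
    rw [flowComp_append, flowComp_append]
    exact foldl_mono p hR τ
  -- disjointness
  have hdisj : ∀ i ∈ σ, i ∉ π := by
    intro i hi hiπ
    have : i ∈ S \ S' := (hσ.2 i).mp hi
    exact (Finset.mem_sdiff.mp this).2 ((hπ.2 i).mp hiπ)
  have hdisj' : ∀ i ∈ σ, i ∉ π' := by
    intro i hi hiπ
    have : i ∈ S \ S' := (hσ.2 i).mp hi
    exact (Finset.mem_sdiff.mp this).2 ((hπ'.2 i).mp hiπ)
  refine ⟨(key σ).2.1, (key σ).2.2, ?_⟩
  -- Fcost part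
  have split : ∀ (ρ : List ℕ), (∀ i ∈ σ, i ∉ ρ) →
      Fcost p f (ρ ++ σ) = Fcost p f ρ +
        (σ.map (fun i => f i (C3 p (ρ ++ (σ.takeWhile (· != i) ++ [i]))))).sum := by
    intro ρ hd
    unfold Fcost
    rw [List.map_append, List.sum_append]
    congr 1
    · apply congrArg
      apply List.map_congr_left
      intro i hi
      unfold jobC
      rw [takeWhile_append_left σ hi]
    · apply congrArg
      apply List.map_congr_left
      intro i hi
      unfold jobC
      rw [takeWhile_append_right σ (hd i hi), List.append_assoc]
  rw [split π hdisj, split π' hdisj']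
  refine add_le_add hf ?_
  apply List.sum_le_sum
  intro i hi
  exact hfmono i ((key (σ.takeWhile (· != i) ++ [i])).2.2)
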